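/- Let 0 < α₁ < α₂ < 1 and c > 0, and set A(s) = (α₂ c + α₁ s)/( s (c + s) ). For every real r > 0 with r ≠ c, define w(r) = ((α₂ − 1)c − (α₁ − 1)r)/(c − r). Then, with the principal complex power, ((−r : ℂ))^{((−r)·A(−r) − 1)} = r^{w(r)} ( cos(π w(r)) + i · sin(π w(r)) ); in particular the imaginary part of ((−r : ℂ))^{((−r)·A(−r) − 1)} equals r^{w(r)} sin(π w(r)). -/

import Mathlib

open Complex Real

theorem titchmarsh_inversion_exponential_transition
    (α₁ α₂ c r A w : ℝ)
    (h1 : 0 < α₁) (h12 : α₁ < α₂) (h2 : α₂ < 1) (hc : 0 < c)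
    (hr : 0 < r) (hrc : r ≠ c)
    (hA : A = (α₂ * c + α₁ * (-r)) / ((-r) * (c + (-r))))
    (hw : w = ((α₂ - 1) * c - (α₁ - 1) * r) / (c - r)) :
    ((-r : ℂ)) ^ ((-r : ℂ) * (A : ℂ) - 1)
      = (r : ℂ) ^ (w : ℂ)
        * (Real.cos (Real.pi * w) + Complex.I * Real.sin (Real.pi * w)) ∧
    (((-r : ℂ)) ^ ((-r : ℂ) * (A : ℂ) - 1)).im = r ^ w * Real.sin (Real.pi * w) := by
  have hr0 : (r : ℝ) ≠ 0 := ne_of_gt hr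
  have hcr : c - r ≠ 0 := sub_ne_zero.mpr (Ne.symm hrc)
  have hcr2 : c + -r ≠ 0 := by rw [← sub_eq_add_neg]; exact hcr
  have hexpR : -r * A - 1 = w := by
    rw [hA, hw]
    field_simp
    ring
  have hexp : (-r : ℂ) * (A : ℂ) - 1 = (w : ℂ) := by
    exact_mod_cast congrArg (fun x : ℝ => (x : ℂ)) hexpR
  have hne : (-r : ℂ) ≠ 0 := by
    simp [hr0]
  have hlog : Complex.log (-r : ℂ) = (Real.log r : ℂ) + Real.pi * Complex.I := by
    have h1 : ‖(-r : ℂ)‖ = r := by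
      simp [abs_of_pos hr]
    have h2 : Complex.arg (-r : ℂ) = Real.pi := by
      have : ((-r : ℝ) : ℂ) = (-r : ℂ) := by push_cast; ring
      rw [← this, Complex.arg_ofReal_of_neg (by linarith)]
    rw [Complex.log, h1, h2]
  have key : ((-r : ℂ)) ^ ((-r : ℂ) * (A : ℂ) - 1)
      = (r : ℂ) ^ (w : ℂ)
        * (Real.cos (Real.pi * w) + Complex.I * Real.sin (Real.pi * w)) := by
    rw [hexp, Complex.cpow_def_of_ne_zero hne, hlog]
    have hrpow : (r : ℂ) ^ (w : ℂ) = ((r ^ w : ℝ) : ℂ) :=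
      (Complex.ofReal_cpow hr.le w).symm
    rw [hrpow, add_mul, Complex.exp_add]
    have h3 : ((Real.pi : ℂ) * Complex.I) * (w : ℂ) = ((Real.pi * w : ℝ) : ℂ) * Complex.I := by
      push_cast; ring
    rw [h3, Complex.exp_mul_I]
    have hlog2 : (Real.log r : ℂ) * (w : ℂ) = ((Real.log r * w : ℝ) : ℂ) := by push_cast; ring
    rw [hlog2, ← Complex.ofReal_exp]
    rw [Real.exp_mul, Real.exp_log hr]
    
    rw [Complex.ofReal_cos, Complex.ofReal_sin]
    push_cast
    ring
  refine ⟨key, ?_⟩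
  rw [key]
  have hrpow : (r : ℂ) ^ (w : ℂ) = ((r ^ w : ℝ) : ℂ) :=
    (Complex.ofReal_cpow hr.le w).symm
  rw [hrpow]
  simp only [Complex.mul_im, Complex.add_im, Complex.add_re, Complex.ofReal_re,
    Complex.ofReal_im, Complex.mul_re, Complex.mul_im, Complex.I_re, Complex.I_im]
  ring
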